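/- Let H(t) = (at+b)/(ct+d) be a Möbius transformation with a,b,c,d natural numbers. Suppose t₀ > 0 is a fixed point of H (with ct₀ + d ≠ 0) and H is increasing in a neighborhood of t₀. Then H'(t₀) ≤ 1, with equality if and only if H(t) = t for all t. -/

import Mathlib

/-- **Möbius derivative at a positive fixed point.**
Let `H t = (a t + b) / (c t + d)` with `a b c d : ℕ` and `a*d - b*c ≠ 0` (as integers).
If `t₀ > 0` is a fixed point of `H`, `c*t₀ + d ≠ 0`, and `H` is monotone increasing in a
neighborhood of `t₀`, then `deriv H t₀ ≤ 1`, with equality iff `H` is the identity. -/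
theorem mobius_deriv_le_one (a b c d : ℕ)
    (hdet : (a : ℤ) * d - b * c ≠ 0)
    (H : ℝ → ℝ)
    (hH : ∀ t : ℝ, H t = ((a : ℝ) * t + b) / ((c : ℝ) * t + d))
    (t₀ : ℝ) (ht₀ : 0 < t₀) (hden : (c : ℝ) * t₀ + d ≠ 0)
    (hfix : H t₀ = t₀)
    (hmono : ∃ ε > 0, MonotoneOn H (Set.Ioo (t₀ - ε) (t₀ + ε))) :
    deriv H t₀ ≤ 1 ∧ (deriv H t₀ = 1 ↔ ∀ t : ℝ, H t = t) := by
  have hd0 : (0:ℝ) < (c:ℝ) * t₀ + d := by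
    have h0 : (0:ℝ) ≤ (c:ℝ) * t₀ + d := by positivity
    exact h0.lt_of_ne (Ne.symm hden)
  have hfix' : (a:ℝ) * t₀ + b = t₀ * ((c:ℝ) * t₀ + d) := by
    have h := hfix
    rw [hH] at h
    rw [div_eq_iff hden] at h
    linarith
  -- compute the derivative
  have h1 : HasDerivAt (fun t : ℝ => (a:ℝ) * t + b) (a:ℝ) t₀ := by
    simpa using ((hasDerivAt_id t₀).const_mul (a:ℝ)).add_const (b:ℝ)
  have h2 : HasDerivAt (fun t : ℝ => (c:ℝ) * t + d) (c:ℝ) t₀ := by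
    simpa using ((hasDerivAt_id t₀).const_mul (c:ℝ)).add_const (d:ℝ)
  have h3 := h1.div h2 hden
  have hHeq : H = fun t => ((a:ℝ) * t + b) / ((c:ℝ) * t + d) := funext hH
  have h4 : deriv H t₀ =
      ((a:ℝ) * ((c:ℝ) * t₀ + d) - ((a:ℝ) * t₀ + b) * c) / ((c:ℝ) * t₀ + d) ^ 2 := by
    rw [hHeq]; exact h3.deriv
  have h5 : deriv H t₀ = ((a:ℝ) - c * t₀) / ((c:ℝ) * t₀ + d) := by
    rw [h4, hfix']
    field_simp
  have hb : (0:ℝ) ≤ (b:ℝ) := Nat.cast_nonneg b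
  have hc : (0:ℝ) ≤ (c:ℝ) := Nat.cast_nonneg c
  constructor
  · rw [h5, div_le_one hd0]
    have key : ((a:ℝ) - c * t₀) * t₀ ≤ ((c:ℝ) * t₀ + d) * t₀ := by
      nlinarith [hfix', mul_nonneg hc (mul_nonneg ht₀.le ht₀.le), hb]
    exact le_of_mul_le_mul_right key ht₀
  · constructor
    · intro heq
      rw [h5, div_eq_one_iff_eq hden] at heq
      -- heq : a - c*t₀ = c*t₀ + d
      have hkey : (c:ℝ) * t₀ ^ 2 + b = 0 := by nlinarith [hfix']
      have hct : (0:ℝ) ≤ (c:ℝ) * t₀ ^ 2 := by positivity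
      have hb0 : (b:ℝ) = 0 := by linarith
      have hct0 : (c:ℝ) * t₀ ^ 2 = 0 := by linarith
      have hc0 : (c:ℝ) = 0 := by
        rcases mul_eq_zero.mp hct0 with h | h
        · exact h
        · exact absurd h (by positivity)
      have hcn : c = 0 := by exact_mod_cast hc0
      have hbn : b = 0 := by exact_mod_cast hb0
      subst hcn hbn
      have had : (a:ℤ) * d ≠ 0 := by simpa using hdet
      have hdn : (d:ℝ) ≠ 0 := by
        have : d ≠ 0 := by
          intro h; subst h; simp at had
        exact_mod_cast this
      have h6 : (a:ℝ) * t₀ = (d:ℝ) * t₀ := by linear_combination hfix'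
      have haed : (a:ℝ) = d := mul_right_cancel₀ (ne_of_gt ht₀) h6
      intro t
      rw [hH]
      simp only [Nat.cast_zero, zero_mul, zero_add, add_zero]
      rw [haed]
      exact mul_div_cancel_left₀ t hdn
    · intro hid
      have : H = id := funext hid
      rw [this]
      simp
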